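/- (Large Deviation Theorem.) For every integer n ≥ 1, every binary word w ∈ {0,1}^n, and every real κ > 0, there exist a real ν > 0 and a natural number N₀ such that for all N ≥ N₀, the number of words v ∈ {0,1}^N that are κ,w-atypical is at most 2^(N(1−ν)). -/

import Mathlib

/-- Number of occurrences of the word `w` (of length `n`) in the word `v` (of length `N`):
the number of indices `i` with `0 ≤ i ≤ N - n` such that `v (i+j) = w j` for all `0 ≤ j < n`. -/
noncomputable def occCount (N n : ℕ) (v : Fin N → Bool) (w : Fin n → Bool) : ℕ :=
  Nat.card {i : ℕ // i + n ≤ N ∧ ∀ (j : Fin n) (h : i + (j : ℕ) < N), v ⟨i + (j : ℕ), h⟩ = w j}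


open Finset

namespace LDAux

def MatchAt (N n : ℕ) (v : Fin N → Bool) (w : Fin n → Bool) (i : ℕ) : Prop :=
  i + n ≤ N ∧ ∀ (j : Fin n) (h : i + (j : ℕ) < N), v ⟨i + (j : ℕ), h⟩ = w j

open Classical in
noncomputable def X (N n : ℕ) (w : Fin n → Bool) (r : ℕ) (v : Fin N → Bool) : ℕ :=
  ((Finset.range ((N - r) / n)).filter (fun j => MatchAt N n v w (r + j * n))).card

variable {N n : ℕ}

lemma block_lt (hn : 0 < n) (r : ℕ) {j l : ℕ} (hj : j < (N - r) / n) (hl : l < n) :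
    r + j * n + l < N := by
  have h2 : (N - r) / n * n ≤ N - r := Nat.div_mul_le_self _ _
  have h1 : (j + 1) * n ≤ (N - r) / n * n := Nat.mul_le_mul_right _ (by omega)
  have h3 : (j + 1) * n = j * n + n := by ring
  omega

/-- Decomposition of a word into the `r`-aligned blocks of length `n` and the rest. -/
noncomputable def blockEquiv (N n : ℕ) (hn : 0 < n) (r : ℕ) :
    (Fin N → Bool) ≃ ((Fin ((N - r) / n) → Fin n → Bool) ×
      ({i : Fin N // ¬(r ≤ i.1 ∧ i.1 < r + (N - r) / n * n)} → Bool)) where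
  toFun v := (fun j l => v ⟨r + j.1 * n + l.1, block_lt hn r j.2 l.2⟩, fun i => v i.1)
  invFun gh i :=
    if hp : r ≤ i.1 ∧ i.1 < r + (N - r) / n * n then
      gh.1 ⟨(i.1 - r) / n, Nat.div_lt_of_lt_mul (by rw [mul_comm]; omega)⟩ ⟨(i.1 - r) % n, Nat.mod_lt _ hn⟩
    else gh.2 ⟨i, hp⟩
  left_inv v := by
    funext i
    by_cases hp : r ≤ i.1 ∧ i.1 < r + (N - r) / n * n
    · simp only [dif_pos hp]
      congr 1
      apply Fin.ext
      show r + (i.1 - r) / n * n + (i.1 - r) % n = i.1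
      have h1 := Nat.div_add_mod (i.1 - r) n
      have h2 : (i.1 - r) / n * n = n * ((i.1 - r) / n) := mul_comm _ _
      omega
    · simp only [dif_neg hp]
  right_inv gh := by
    refine Prod.ext ?_ ?_
    · funext j l
      have hp : r ≤ r + j.1 * n + l.1 ∧ r + j.1 * n + l.1 < r + (N - r) / n * n := by
        refine ⟨by omega, ?_⟩
        have h1 : (j.1 + 1) * n ≤ (N - r) / n * n := Nat.mul_le_mul_right _ (by omega)
        have h3 : (j.1 + 1) * n = j.1 * n + n := by ring
        omega
      show (if hp' : _ ∧ _ then _ else _) = gh.1 j l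
      rw [dif_pos hp]
      have e0 : r + j.1 * n + l.1 - r = j.1 * n + l.1 := by omega
      have e1 : (r + j.1 * n + l.1 - r) / n = j.1 := by
        rw [e0, mul_comm, Nat.mul_add_div hn, Nat.div_eq_of_lt l.2, Nat.add_zero]
      have e2 : (r + j.1 * n + l.1 - r) % n = l.1 := by
        rw [e0, mul_comm (j.1) n, Nat.mul_add_mod, Nat.mod_eq_of_lt l.2]
      have key : ∀ (a : Fin ((N - r) / n)) (b : Fin n), a = j → b = l → gh.1 a b = gh.1 j l := by
        intro a b ha hb; rw [ha, hb]
      exact key _ _ (Fin.ext e1) (Fin.ext e2)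
    · funext i
      show (if hp' : _ ∧ _ then _ else _) = gh.2 i
      rw [dif_neg i.2]

lemma matchAt_symm_iff (hn : 0 < n) (r : ℕ) (w : Fin n → Bool)
    (g : Fin ((N - r) / n) → Fin n → Bool)
    (h : {i : Fin N // ¬(r ≤ i.1 ∧ i.1 < r + (N - r) / n * n)} → Bool)
    (j : Fin ((N - r) / n)) :
    MatchAt N n ((blockEquiv N n hn r).symm (g, h)) w (r + j.1 * n) ↔ g j = w := by
  have hv : ∀ l : Fin n,
      (blockEquiv N n hn r).symm (g, h) ⟨r + j.1 * n + l.1, block_lt hn r j.2 l.2⟩ = g j l :=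
    fun l => congrFun (congrFun (congrArg Prod.fst
      ((blockEquiv N n hn r).apply_symm_apply (g, h))) j) l
  constructor
  · intro hM
    funext l
    have hlt : r + j.1 * n + l.1 < N := block_lt hn r j.2 l.2
    have := hM.2 l hlt
    rw [← hv l]
    exact this
  · intro hg
    constructor
    · have := block_lt (N := N) hn r j.2 (Nat.sub_lt hn Nat.one_pos)
      omega
    · intro l hl
      have := hv l
      rw [this]
      exact congrFun hg l

lemma X_symm (hn : 0 < n) (r : ℕ) (w : Fin n → Bool)
    (g : Fin ((N - r) / n) → Fin n → Bool)
    (h : {i : Fin N // ¬(r ≤ i.1 ∧ i.1 < r + (N - r) / n * n)} → Bool) :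
    X N n w r ((blockEquiv N n hn r).symm (g, h))
      = (univ.filter (fun j => g j = w)).card := by
  classical
  rw [X, Finset.card_filter, Finset.card_filter,
    ← Fin.sum_univ_eq_sum_range (fun j => if MatchAt N n ((blockEquiv N n hn r).symm (g, h)) w (r + j * n) then 1 else 0)]
  refine Finset.sum_congr rfl fun j _ => ?_
  have := matchAt_symm_iff hn r w g h j
  by_cases hgj : g j = w
  · rw [if_pos hgj, if_pos (this.mpr hgj)]
  · rw [if_neg hgj, if_neg (fun hc => hgj (this.mp hc))]

lemma card_blockRegion (hn : 0 < n) (r : ℕ) :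
    Fintype.card {i : Fin N // r ≤ i.1 ∧ i.1 < r + (N - r) / n * n} = (N - r) / n * n := by
  classical
  have hmn : (N - r) / n * n ≤ N - r := Nat.div_mul_le_self _ _
  by_cases hrN : r ≤ N
  · rw [Fintype.card_subtype]
    have : (univ.filter (fun i : Fin N => r ≤ i.1 ∧ i.1 < r + (N - r) / n * n)).card
        = ((Finset.range N).filter (fun i => r ≤ i ∧ i < r + (N - r) / n * n)).card := by
      rw [Finset.card_filter, Finset.card_filter,
        ← Fin.sum_univ_eq_sum_range (fun i => if r ≤ i ∧ i < r + (N - r) / n * n then 1 else 0)]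
    rw [this]
    have : (Finset.range N).filter (fun i => r ≤ i ∧ i < r + (N - r) / n * n)
        = Finset.Ico r (r + (N - r) / n * n) := by
      ext i
      simp only [Finset.mem_filter, Finset.mem_range, Finset.mem_Ico]
      omega
    rw [this, Nat.card_Ico]
    omega
  · have h0 : N - r = 0 := by omega
    rw [h0]
    simp only [Nat.zero_div, Nat.zero_mul]
    rw [Fintype.card_eq_zero_iff]
    constructor
    intro x
    omega

lemma sum_exp (hn : 0 < n) (r : ℕ) (w : Fin n → Bool) (t : ℝ) :
    ∑ v : Fin N → Bool, Real.exp (t * (X N n w r v : ℝ))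
      = (2 : ℝ) ^ (N - (N - r) / n * n) *
        (Real.exp t + ((2 : ℝ) ^ n - 1)) ^ ((N - r) / n) := by
  classical
  rw [← Equiv.sum_comp ((blockEquiv N n hn r).symm)
    (fun v => Real.exp (t * (X N n w r v : ℝ))), Fintype.sum_prod_type]
  have hX : ∀ g h, X N n w r ((blockEquiv N n hn r).symm (g, h))
      = (univ.filter (fun j => g j = w)).card := X_symm hn r w
  have hcard2 : Fintype.card {i : Fin N // ¬(r ≤ i.1 ∧ i.1 < r + (N - r) / n * n)}
      = N - (N - r) / n * n := by
    rw [Fintype.card_subtype_compl, card_blockRegion hn r, Fintype.card_fin]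
  have hprod : ∀ g : Fin ((N - r) / n) → Fin n → Bool,
      Real.exp (t * ((univ.filter (fun j => g j = w)).card : ℝ))
        = ∏ j, if g j = w then Real.exp t else 1 := by
    intro g
    rw [Finset.card_filter]
    push_cast
    rw [Finset.mul_sum, Real.exp_sum]
    refine Finset.prod_congr rfl fun j _ => ?_
    by_cases hgj : g j = w <;> simp [hgj]
  calc ∑ g : Fin ((N - r) / n) → Fin n → Bool,
        ∑ h : {i : Fin N // ¬(r ≤ i.1 ∧ i.1 < r + (N - r) / n * n)} → Bool,
          Real.exp (t * (X N n w r ((blockEquiv N n hn r).symm (g, h)) : ℝ))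
      = ∑ g : Fin ((N - r) / n) → Fin n → Bool,
          (2 : ℝ) ^ (N - (N - r) / n * n) * ∏ j, if g j = w then Real.exp t else 1 := by
        refine Finset.sum_congr rfl fun g _ => ?_
        rw [Finset.sum_congr rfl (fun h _ => by rw [hX g h, hprod g]),
          Finset.sum_const, Finset.card_univ, Fintype.card_fun, hcard2]
        push_cast
        simp [nsmul_eq_mul]
    _ = (2 : ℝ) ^ (N - (N - r) / n * n) *
          ∑ g : Fin ((N - r) / n) → Fin n → Bool, ∏ j, if g j = w then Real.exp t else 1 := by
        rw [← Finset.mul_sum]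
    _ = (2 : ℝ) ^ (N - (N - r) / n * n) *
        (Real.exp t + ((2 : ℝ) ^ n - 1)) ^ ((N - r) / n) := by
        congr 1
        rw [← Fintype.sum_pow (fun b : Fin n → Bool => if b = w then Real.exp t else 1)]
        congr 1
        have : ∀ b : Fin n → Bool, (if b = w then Real.exp t else 1)
            = (if b = w then Real.exp t - 1 else 0) + 1 := by
          intro b; by_cases hb : b = w <;> simp [hb]
        rw [Finset.sum_congr rfl (fun b _ => this b), Finset.sum_add_distrib,
          Finset.sum_ite_eq' univ w (fun _ => Real.exp t - 1), if_pos (Finset.mem_univ w),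
          Finset.sum_const, Finset.card_univ, Fintype.card_fun]
        simp only [Fintype.card_bool, Fintype.card_fin, nsmul_eq_mul, mul_one]
        push_cast
        ring

lemma occCount_eq_sum {N n : ℕ} (hn : 1 ≤ n) (v : Fin N → Bool) (w : Fin n → Bool) :
    occCount N n v w = ∑ r ∈ Finset.range n, X N n w r v := by
  classical
  have hpos : 0 < n := hn
  have h1 : occCount N n v w = ((Finset.range N).filter (MatchAt N n v w)).card := by
    have hset : {i : ℕ | MatchAt N n v w i}
        = ↑((Finset.range N).filter (MatchAt N n v w)) := by
      ext i
      simp only [Set.mem_setOf_eq, Finset.coe_filter, Finset.mem_range, Set.mem_setOf_eq]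
      exact ⟨fun h => ⟨lt_of_lt_of_le (by omega : i < i + n) h.1, h⟩, fun h => h.2⟩
    have hc := Nat.card_coe_set_eq {i : ℕ | MatchAt N n v w i}
    exact hc.trans (by rw [hset, Set.ncard_coe_finset])
  have h2 : ((Finset.range N).filter (MatchAt N n v w)).card
      = ∑ r ∈ Finset.range n, (((Finset.range N).filter (MatchAt N n v w)).filter
          (fun i => i % n = r)).card :=
    Finset.card_eq_sum_card_fiberwise (fun i _ => Finset.mem_range.mpr (Nat.mod_lt _ hpos))
  rw [h1, h2]
  refine Finset.sum_congr rfl (fun r hr => ?_)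
  have hrn : r < n := Finset.mem_range.mp hr
  rw [X]
  refine Finset.card_nbij' (fun i => (i - r) / n) (fun j => r + j * n) ?_ ?_ ?_ ?_
  · intro i hi
    simp only [Finset.coe_filter, Set.mem_setOf_eq, Finset.mem_filter, Finset.mem_range] at hi
    obtain ⟨⟨hiN, hM⟩, hmod⟩ := hi
    have hdm : n * (i / n) + i % n = i := Nat.div_add_mod i n
    have hri : r ≤ i := hmod ▸ Nat.mod_le i n
    have hq : (i - r) / n = i / n := by
      have : i - r = n * (i / n) := by omega
      rw [this, Nat.mul_div_cancel_left _ hpos]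
    have key : r + (i - r) / n * n = i := by
      rw [hq, mul_comm]; omega
    simp only [Finset.mem_coe, Finset.mem_filter, Finset.mem_range]
    constructor
    · have hiN' : i + n ≤ N := hM.1
      have : (i - r) / n + 1 ≤ (N - r) / n := by
        rw [Nat.le_div_iff_mul_le hpos]
        calc ((i - r) / n + 1) * n = (i - r) / n * n + n := by ring
        _ ≤ N - r := by rw [hq, mul_comm]; omega
      omega
    · rw [key]; exact hM
  · intro j hj
    simp only [Finset.coe_filter, Set.mem_setOf_eq, Finset.mem_filter, Finset.mem_range] at hj
    obtain ⟨hjm, hM⟩ := hj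
    simp only [Finset.mem_coe, Finset.mem_filter, Finset.mem_range]
    have hMn := hM.1
    refine ⟨⟨by omega, hM⟩, ?_⟩
    rw [Nat.add_mul_mod_self_right, Nat.mod_eq_of_lt hrn]
  · intro i hi
    simp only [Finset.coe_filter, Set.mem_setOf_eq, Finset.mem_filter, Finset.mem_range] at hi
    obtain ⟨⟨hiN, hM⟩, hmod⟩ := hi
    have hdm : n * (i / n) + i % n = i := Nat.div_add_mod i n
    have hri : r ≤ i := hmod ▸ Nat.mod_le i n
    have hq : (i - r) / n = i / n := by
      have : i - r = n * (i / n) := by omega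
      rw [this, Nat.mul_div_cancel_left _ hpos]
    show r + (i - r) / n * n = i
    rw [hq, mul_comm]; omega
  · intro j hj
    show (r + j * n - r) / n = j
    rw [Nat.add_sub_cancel_left, Nat.mul_div_cancel _ hpos]

end LDAux

namespace Tails

open Real LDAux

lemma exp_quad {t : ℝ} (ht : |t| ≤ 1) : Real.exp t ≤ 1 + t + t ^ 2 := by
  have h := Real.exp_bound ht (n := 2) (by norm_num)
  simp [Finset.sum_range_succ, Nat.factorial] at h
  have h' := (abs_sub_le_iff.mp h).1
  nlinarith [sq_abs t, sq_nonneg t]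

variable {N n : ℕ}

lemma chernoff_factor (hn : 0 < n) {t : ℝ} (ht : |t| ≤ 1) :
    Real.exp t + ((2 : ℝ) ^ n - 1) ≤ 2 ^ n * Real.exp ((1 / 2 : ℝ) ^ n * (t + t ^ 2)) := by
  have h1 : Real.exp t + ((2 : ℝ) ^ n - 1) ≤ 2 ^ n + (t + t ^ 2) := by
    have := exp_quad ht
    linarith
  have hp : (2 : ℝ) ^ n * (1 / 2 : ℝ) ^ n = 1 := by
    rw [← mul_pow]; norm_num
  have h2 : (2 : ℝ) ^ n + (t + t ^ 2) = 2 ^ n * (1 + (1 / 2 : ℝ) ^ n * (t + t ^ 2)) := by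
    rw [mul_add, mul_one, ← mul_assoc, hp, one_mul]
  have h3 : 1 + (1 / 2 : ℝ) ^ n * (t + t ^ 2) ≤ Real.exp ((1 / 2 : ℝ) ^ n * (t + t ^ 2)) := by
    have := Real.add_one_le_exp ((1 / 2 : ℝ) ^ n * (t + t ^ 2))
    linarith
  calc Real.exp t + ((2 : ℝ) ^ n - 1) ≤ 2 ^ n + (t + t ^ 2) := h1
  _ = 2 ^ n * (1 + (1 / 2 : ℝ) ^ n * (t + t ^ 2)) := h2
  _ ≤ 2 ^ n * Real.exp ((1 / 2 : ℝ) ^ n * (t + t ^ 2)) := by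
      have : (0 : ℝ) < 2 ^ n := by positivity
      nlinarith
  
lemma sum_exp_le (hn : 0 < n) (r : ℕ) (w : Fin n → Bool) {t : ℝ} (ht : |t| ≤ 1) :
    ∑ v : Fin N → Bool, Real.exp (t * (X N n w r v : ℝ))
      ≤ 2 ^ N * Real.exp ((1 / 2 : ℝ) ^ n * ((N - r) / n : ℕ) * (t + t ^ 2)) := by
  rw [LDAux.sum_exp hn r w t]
  set m := (N - r) / n with hm
  have hbase : (0 : ℝ) ≤ Real.exp t + ((2 : ℝ) ^ n - 1) := by
    have h1 : (1 : ℝ) ≤ (2 : ℝ) ^ n := one_le_pow₀ (by norm_num)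
    linarith [Real.exp_pos t]
  have hpow : (Real.exp t + ((2 : ℝ) ^ n - 1)) ^ m
      ≤ (2 ^ n * Real.exp ((1 / 2 : ℝ) ^ n * (t + t ^ 2))) ^ m :=
    pow_le_pow_left₀ hbase (chernoff_factor hn ht) m
  have hmn : m * n ≤ N := le_trans (Nat.div_mul_le_self _ _) (Nat.sub_le _ _)
  calc (2 : ℝ) ^ (N - m * n) * (Real.exp t + ((2 : ℝ) ^ n - 1)) ^ m
      ≤ (2 : ℝ) ^ (N - m * n) * (2 ^ n * Real.exp ((1 / 2 : ℝ) ^ n * (t + t ^ 2))) ^ m := by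
        have : (0 : ℝ) ≤ (2 : ℝ) ^ (N - m * n) := by positivity
        exact mul_le_mul_of_nonneg_left hpow this
  _ = 2 ^ N * Real.exp ((1 / 2 : ℝ) ^ n * (m : ℕ) * (t + t ^ 2)) := by
      rw [mul_pow, ← pow_mul, ← Real.exp_nat_mul, ← mul_assoc, ← pow_add]
      rw [Nat.mul_comm n m]
      congr 2
      · omega
      · ring

end Tails

namespace Tails2

open Real LDAux Tails

variable {N n : ℕ}

open Classical in
lemma card_upper (hn : 0 < n) (r : ℕ) (w : Fin n → Bool) {t s : ℝ}
    (ht0 : 0 ≤ t) (ht1 : t ≤ 1) :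
    ((Finset.univ.filter (fun v : Fin N → Bool =>
        (1 / 2 : ℝ) ^ n * ((N - r) / n : ℕ) + s ≤ (X N n w r v : ℝ))).card : ℝ)
      ≤ 2 ^ N * Real.exp ((((N - r) / n : ℕ) : ℝ) * t ^ 2 - t * s) := by
  set m := (N - r) / n with hm
  set p : ℝ := (1 / 2 : ℝ) ^ n with hp
  set c : ℝ := p * m + s with hc
  have hmarkov : ((Finset.univ.filter (fun v : Fin N → Bool => c ≤ (X N n w r v : ℝ))).card : ℝ)
      * Real.exp (t * c) ≤ ∑ v : Fin N → Bool, Real.exp (t * (X N n w r v : ℝ)) := by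
    calc ((Finset.univ.filter (fun v : Fin N → Bool => c ≤ (X N n w r v : ℝ))).card : ℝ)
          * Real.exp (t * c)
        = ∑ _v ∈ Finset.univ.filter (fun v : Fin N → Bool => c ≤ (X N n w r v : ℝ)),
            Real.exp (t * c) := by rw [Finset.sum_const, nsmul_eq_mul]
      _ ≤ ∑ v ∈ Finset.univ.filter (fun v : Fin N → Bool => c ≤ (X N n w r v : ℝ)),
            Real.exp (t * (X N n w r v : ℝ)) := by
          refine Finset.sum_le_sum fun v hv => ?_
          have hvc : c ≤ (X N n w r v : ℝ) := (Finset.mem_filter.mp hv).2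
          exact Real.exp_le_exp.mpr (mul_le_mul_of_nonneg_left hvc ht0)
      _ ≤ ∑ v : Fin N → Bool, Real.exp (t * (X N n w r v : ℝ)) :=
          Finset.sum_le_sum_of_subset_of_nonneg (Finset.subset_univ _)
            (fun v _ _ => (Real.exp_pos _).le)
  have hS := sum_exp_le (N := N) hn r w (t := t) (abs_le.mpr ⟨by linarith, ht1⟩)
  rw [← hp, ← hm] at hS
  have hec : (0 : ℝ) < Real.exp (t * c) := Real.exp_pos _
  have hcard : ((Finset.univ.filter (fun v : Fin N → Bool => c ≤ (X N n w r v : ℝ))).card : ℝ)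
      ≤ 2 ^ N * Real.exp (p * m * (t + t ^ 2)) * Real.exp (-(t * c)) := by
    rw [← le_div_iff₀ hec] at hmarkov
    calc _ ≤ (∑ v : Fin N → Bool, Real.exp (t * (X N n w r v : ℝ))) / Real.exp (t * c) :=
          hmarkov
    _ ≤ 2 ^ N * Real.exp (p * m * (t + t ^ 2)) / Real.exp (t * c) := by
        gcongr
    _ = 2 ^ N * Real.exp (p * m * (t + t ^ 2)) * Real.exp (-(t * c)) := by
        rw [Real.exp_neg, div_eq_mul_inv]
  have hfin : 2 ^ N * Real.exp (p * ↑m * (t + t ^ 2)) * Real.exp (-(t * c))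
      ≤ 2 ^ N * Real.exp ((m : ℝ) * t ^ 2 - t * s) := by
    rw [mul_assoc, ← Real.exp_add]
    have hpm : p * (m : ℝ) * (t + t ^ 2) + -(t * c) ≤ (m : ℝ) * t ^ 2 - t * s := by
      rw [hc]
      have hp1 : p ≤ 1 := by
        rw [hp]
        exact pow_le_one₀ (by norm_num) (by norm_num)
      have hp0 : 0 ≤ p := by rw [hp]; positivity
      have hm0 : (0 : ℝ) ≤ (m : ℝ) := Nat.cast_nonneg _
      nlinarith [mul_nonneg (mul_nonneg (sub_nonneg.2 hp1) hm0) (sq_nonneg t)]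
    have h2N : (0 : ℝ) ≤ 2 ^ N := by positivity
    exact mul_le_mul_of_nonneg_left (Real.exp_le_exp.mpr hpm) h2N
  exact hcard.trans hfin

end Tails2

namespace Tails3

open Real LDAux Tails

variable {N n : ℕ}

open Classical in
lemma card_lower (hn : 0 < n) (r : ℕ) (w : Fin n → Bool) {t s : ℝ}
    (ht0 : 0 ≤ t) (ht1 : t ≤ 1) :
    ((Finset.univ.filter (fun v : Fin N → Bool =>
        (X N n w r v : ℝ) ≤ (1 / 2 : ℝ) ^ n * ((N - r) / n : ℕ) - s)).card : ℝ)
      ≤ 2 ^ N * Real.exp ((((N - r) / n : ℕ) : ℝ) * t ^ 2 - t * s) := by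
  set m := (N - r) / n with hm
  set p : ℝ := (1 / 2 : ℝ) ^ n with hp
  set c : ℝ := p * m - s with hc
  have hmarkov : ((Finset.univ.filter (fun v : Fin N → Bool => (X N n w r v : ℝ) ≤ c)).card : ℝ)
      * Real.exp (-t * c) ≤ ∑ v : Fin N → Bool, Real.exp (-t * (X N n w r v : ℝ)) := by
    calc ((Finset.univ.filter (fun v : Fin N → Bool => (X N n w r v : ℝ) ≤ c)).card : ℝ)
          * Real.exp (-t * c)
        = ∑ _v ∈ Finset.univ.filter (fun v : Fin N → Bool => (X N n w r v : ℝ) ≤ c),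
            Real.exp (-t * c) := by rw [Finset.sum_const, nsmul_eq_mul]
      _ ≤ ∑ v ∈ Finset.univ.filter (fun v : Fin N → Bool => (X N n w r v : ℝ) ≤ c),
            Real.exp (-t * (X N n w r v : ℝ)) := by
          refine Finset.sum_le_sum fun v hv => ?_
          have hvc : (X N n w r v : ℝ) ≤ c := (Finset.mem_filter.mp hv).2
          exact Real.exp_le_exp.mpr (mul_le_mul_of_nonpos_left hvc (by linarith))
      _ ≤ ∑ v : Fin N → Bool, Real.exp (-t * (X N n w r v : ℝ)) :=
          Finset.sum_le_sum_of_subset_of_nonneg (Finset.subset_univ _)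
            (fun v _ _ => (Real.exp_pos _).le)
  have hS := sum_exp_le (N := N) hn r w (t := -t) (by rw [abs_neg]; exact abs_le.mpr ⟨by linarith, ht1⟩)
  rw [← hp, ← hm] at hS
  have hec : (0 : ℝ) < Real.exp (-t * c) := Real.exp_pos _
  have hcard : ((Finset.univ.filter (fun v : Fin N → Bool => (X N n w r v : ℝ) ≤ c)).card : ℝ)
      ≤ 2 ^ N * Real.exp (p * m * (-t + (-t) ^ 2)) * Real.exp (-(-t * c)) := by
    rw [← le_div_iff₀ hec] at hmarkov
    calc _ ≤ (∑ v : Fin N → Bool, Real.exp (-t * (X N n w r v : ℝ))) / Real.exp (-t * c) :=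
          hmarkov
    _ ≤ 2 ^ N * Real.exp (p * m * (-t + (-t) ^ 2)) / Real.exp (-t * c) := by
        gcongr
    _ = 2 ^ N * Real.exp (p * m * (-t + (-t) ^ 2)) * Real.exp (-(-t * c)) := by
        rw [Real.exp_neg, div_eq_mul_inv]
  have hfin : 2 ^ N * Real.exp (p * ↑m * (-t + (-t) ^ 2)) * Real.exp (-(-t * c))
      ≤ 2 ^ N * Real.exp ((m : ℝ) * t ^ 2 - t * s) := by
    rw [mul_assoc, ← Real.exp_add]
    have hpm : p * (m : ℝ) * (-t + (-t) ^ 2) + -(-t * c) ≤ (m : ℝ) * t ^ 2 - t * s := by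
      rw [hc]
      have hp1 : p ≤ 1 := by
        rw [hp]
        exact pow_le_one₀ (by norm_num) (by norm_num)
      have hp0 : 0 ≤ p := by rw [hp]; positivity
      have hm0 : (0 : ℝ) ≤ (m : ℝ) := Nat.cast_nonneg _
      nlinarith [mul_nonneg (mul_nonneg (sub_nonneg.2 hp1) hm0) (sq_nonneg t)]
    have h2N : (0 : ℝ) ≤ 2 ^ N := by positivity
    exact mul_le_mul_of_nonneg_left (Real.exp_le_exp.mpr hpm) h2N
  exact hcard.trans hfin

end Tails3


namespace Assemble

open LDAux

variable {N n : ℕ}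

lemma cast_sub_le (N r : ℕ) : (N : ℝ) - r ≤ ((N - r : ℕ) : ℝ) := by
  by_cases hrN : r ≤ N
  · rw [Nat.cast_sub hrN]
  · have h0 : N - r = 0 := by omega
    have : (N : ℝ) ≤ r := by exact_mod_cast (not_le.mp hrN).le
    rw [h0]; simp; linarith

lemma m_le (hn : 0 < n) (r : ℕ) : (((N - r) / n : ℕ) : ℝ) ≤ (N : ℝ) / n := by
  have h1 : (N - r) / n * n ≤ N := le_trans (Nat.div_mul_le_self _ _) (Nat.sub_le _ _)
  have h1' : (((N - r) / n : ℕ) : ℝ) * n ≤ N := by exact_mod_cast h1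
  have hn' : (0 : ℝ) < n := by exact_mod_cast hn
  rw [le_div_iff₀ hn']
  linarith

lemma m_ge (hn : 0 < n) {r : ℕ} (hr : r < n) :
    (N : ℝ) / n - 2 ≤ (((N - r) / n : ℕ) : ℝ) := by
  have h1 : N - r < n * ((N - r) / n + 1) := Nat.lt_mul_div_succ _ hn
  have h1' : ((N - r : ℕ) : ℝ) < n * ((((N - r) / n : ℕ) : ℝ) + 1) := by exact_mod_cast h1
  have h2 := cast_sub_le N r
  have hrn : (r : ℝ) < n := by exact_mod_cast hr
  have hn' : (0 : ℝ) < n := by exact_mod_cast hn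
  rw [sub_le_iff_le_add, div_le_iff₀ hn']
  nlinarith

end Assemble


/-- A word `v` of length `N` is `κ,w`-atypical if the frequency of occurrences of `w` in `v`
lies outside the interval `[2⁻ⁿ - κ, 2⁻ⁿ + κ]`. -/
def IsAtypicalWord (n N : ℕ) (κ : ℝ) (w : Fin n → Bool) (v : Fin N → Bool) : Prop :=
  (occCount N n v w : ℝ) / N ∉ Set.Icc ((1 / 2 : ℝ) ^ n - κ) ((1 / 2 : ℝ) ^ n + κ)

namespace Assemble2

open LDAux Assemble

variable {N n : ℕ}

lemma atyp_dev {κ : ℝ} {w : Fin n → Bool} {v : Fin N → Bool} (hN : 0 < N)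
    (hv : IsAtypicalWord n N κ w v) :
    κ * N < |(occCount N n v w : ℝ) - (1 / 2 : ℝ) ^ n * N| := by
  rw [IsAtypicalWord, Set.mem_Icc, not_and_or] at hv
  have hN' : (0 : ℝ) < N := by exact_mod_cast hN
  rcases hv with h | h
  · push_neg at h
    rw [div_lt_iff₀ hN'] at h
    rw [abs_sub_comm, lt_abs]
    left; nlinarith
  · push_neg at h
    rw [lt_div_iff₀ hN'] at h
    rw [lt_abs]
    left; nlinarith

open Classical in
lemma exists_dev (hn : 1 ≤ n) (hN : 0 < N) (w : Fin n → Bool) {κ s : ℝ}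
    (hκs : n * s + 2 * n ≤ κ * N)
    (v : Fin N → Bool) (hv : IsAtypicalWord n N κ w v) :
    ∃ r ∈ Finset.range n,
      s < |(X N n w r v : ℝ) - (1 / 2 : ℝ) ^ n * (((N - r) / n : ℕ) : ℝ)| := by
  by_contra hcon
  push_neg at hcon
  have hn0 : 0 < n := hn
  have hn' : (0 : ℝ) < n := by exact_mod_cast hn0
  set p : ℝ := (1 / 2 : ℝ) ^ n with hp
  have hp0 : 0 ≤ p := by rw [hp]; positivity
  have hp1 : p ≤ 1 := pow_le_one₀ (by norm_num) (by norm_num)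
  have hocc : (occCount N n v w : ℝ) = ∑ r ∈ Finset.range n, (X N n w r v : ℝ) := by
    rw [occCount_eq_sum hn v w]; push_cast; rfl
  set M : ℕ → ℝ := fun r => (((N - r) / n : ℕ) : ℝ) with hM
  have hdev := atyp_dev hN hv
  -- triangle inequality part 1
  have hA : |(occCount N n v w : ℝ) - p * ∑ r ∈ Finset.range n, M r| ≤ n * s := by
    rw [hocc, Finset.mul_sum, ← Finset.sum_sub_distrib]
    calc |∑ r ∈ Finset.range n, ((X N n w r v : ℝ) - p * M r)|
        ≤ ∑ r ∈ Finset.range n, |(X N n w r v : ℝ) - p * M r| :=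
          Finset.abs_sum_le_sum_abs _ _
      _ ≤ ∑ r ∈ Finset.range n, s := Finset.sum_le_sum fun r hr => hcon r hr
      _ = n * s := by rw [Finset.sum_const, Finset.card_range, nsmul_eq_mul]
  -- bounds on ∑ M r
  have hMu : ∑ r ∈ Finset.range n, M r ≤ N := by
    calc ∑ r ∈ Finset.range n, M r ≤ ∑ r ∈ Finset.range n, (N : ℝ) / n :=
        Finset.sum_le_sum fun r _ => m_le hn0 r
    _ = n * ((N : ℝ) / n) := by rw [Finset.sum_const, Finset.card_range, nsmul_eq_mul]
    _ = N := by field_simp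
  have hMl : (N : ℝ) - 2 * n ≤ ∑ r ∈ Finset.range n, M r := by
    calc (N : ℝ) - 2 * n = n * ((N : ℝ) / n - 2) := by field_simp
    _ = ∑ r ∈ Finset.range n, ((N : ℝ) / n - 2) := by
        rw [Finset.sum_const, Finset.card_range, nsmul_eq_mul]
    _ ≤ ∑ r ∈ Finset.range n, M r :=
        Finset.sum_le_sum fun r hr => m_ge hn0 (Finset.mem_range.mp hr)
  have hB : |p * ∑ r ∈ Finset.range n, M r - p * N| ≤ 2 * n := by
    rw [abs_sub_comm, abs_of_nonneg (by nlinarith)]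
    nlinarith
  rw [← hp] at hdev
  have htri : |(occCount N n v w : ℝ) - p * N| ≤ n * s + 2 * n := by
    calc |(occCount N n v w : ℝ) - p * N|
        = |((occCount N n v w : ℝ) - p * ∑ r ∈ Finset.range n, M r)
            + (p * ∑ r ∈ Finset.range n, M r - p * N)| := by ring_nf
      _ ≤ |(occCount N n v w : ℝ) - p * ∑ r ∈ Finset.range n, M r|
            + |p * ∑ r ∈ Finset.range n, M r - p * N| := abs_add_le _ _
      _ ≤ n * s + 2 * n := add_le_add hA hB
  linarith

end Assemble2

set_option maxHeartbeats 1600000 in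
open LDAux Assemble Assemble2 in
/-- Large Deviation Theorem: the number of `κ,w`-atypical words of length `N` is at most
`2 ^ (N (1 - ν))` for some `ν > 0` and all sufficiently large `N`. -/
theorem large_deviations (n : ℕ) (hn : 1 ≤ n) (w : Fin n → Bool) (κ : ℝ) (hκ : 0 < κ) :
    ∃ ν : ℝ, 0 < ν ∧ ∃ N₀ : ℕ, ∀ N : ℕ, N₀ ≤ N →
      (Nat.card {v : Fin N → Bool // IsAtypicalWord n N κ w v} : ℝ) ≤
        2 ^ ((N : ℝ) * (1 - ν)) := by
  classical
  have hn0 : 0 < n := hn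
  have hn' : (0 : ℝ) < n := by exact_mod_cast hn0
  set κ' : ℝ := min κ 1 with hκ'
  have hκ'0 : 0 < κ' := lt_min hκ one_pos
  have hκ'1 : κ' ≤ 1 := min_le_right _ _
  have hκ'κ : κ' ≤ κ := min_le_left _ _
  set c : ℝ := κ' ^ 2 / (8 * n) with hc
  have hc0 : 0 < c := by positivity
  have hlog2 : (0 : ℝ) < Real.log 2 := Real.log_pos (by norm_num)
  set ν : ℝ := c / (2 * Real.log 2) with hν
  have hν0 : 0 < ν := by positivity
  refine ⟨ν, hν0, ⟨⌈(2 / c) * (Real.log (2 * n) + 1 / 2)⌉₊ + 1, ?_⟩⟩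
  intro N hN
  have hN1 : 1 ≤ N := le_trans (by omega) hN
  have hN' : (0 : ℝ) < N := by exact_mod_cast hN1
  have hNc : (2 / c) * (Real.log (2 * n) + 1 / 2) ≤ N := by
    have h1 : (⌈(2 / c) * (Real.log (2 * n) + 1 / 2)⌉₊ : ℝ) ≤ N := by
      exact_mod_cast (by omega : ⌈(2 / c) * (Real.log (2 * n) + 1 / 2)⌉₊ ≤ N)
    exact (Nat.le_ceil _).trans h1
  set t : ℝ := κ' / 4 with ht
  have ht0 : 0 ≤ t := by positivity
  have ht1 : t ≤ 1 := by rw [ht]; linarith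
  set s : ℝ := (κ' * N - 2 * n) / n with hs
  have hκs : (n : ℝ) * s + 2 * n ≤ κ * N := by
    rw [hs]
    have : (n : ℝ) * ((κ' * N - 2 * n) / n) = κ' * N - 2 * n := by field_simp
    rw [this]
    nlinarith
  have hcardeq : (Nat.card {v : Fin N → Bool // IsAtypicalWord n N κ w v} : ℕ)
      = (Finset.univ.filter (fun v : Fin N → Bool => IsAtypicalWord n N κ w v)).card := by
    rw [Nat.card_eq_fintype_card, Fintype.card_subtype]
  have hsub : Finset.univ.filter (fun v : Fin N → Bool => IsAtypicalWord n N κ w v)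
      ⊆ (Finset.range n).biUnion (fun r =>
          Finset.univ.filter (fun v : Fin N → Bool =>
            (1 / 2 : ℝ) ^ n * (((N - r) / n : ℕ) : ℝ) + s ≤ (X N n w r v : ℝ))
          ∪ Finset.univ.filter (fun v : Fin N → Bool =>
            (X N n w r v : ℝ) ≤ (1 / 2 : ℝ) ^ n * (((N - r) / n : ℕ) : ℝ) - s)) := by
    intro v hv
    have hva : IsAtypicalWord n N κ w v := (Finset.mem_filter.mp hv).2
    obtain ⟨r, hr, hdev⟩ := exists_dev hn hN1 w hκs v hva
    refine Finset.mem_biUnion.mpr ⟨r, hr, ?_⟩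
    rcases lt_abs.mp hdev with h | h
    · exact Finset.mem_union_left _ (Finset.mem_filter.mpr ⟨Finset.mem_univ _, by linarith⟩)
    · exact Finset.mem_union_right _ (Finset.mem_filter.mpr ⟨Finset.mem_univ _, by linarith⟩)
  have hper : ∀ r ∈ Finset.range n,
      (((Finset.univ.filter (fun v : Fin N → Bool =>
            (1 / 2 : ℝ) ^ n * (((N - r) / n : ℕ) : ℝ) + s ≤ (X N n w r v : ℝ))
          ∪ Finset.univ.filter (fun v : Fin N → Bool =>
            (X N n w r v : ℝ) ≤ (1 / 2 : ℝ) ^ n * (((N - r) / n : ℕ) : ℝ) - s)).card : ℝ))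
        ≤ 2 * (2 ^ N * Real.exp ((N / n) * t ^ 2 - t * s)) := by
    intro r _
    have hU := Tails2.card_upper (N := N) hn0 r w ht0 ht1 (s := s)
    have hL := Tails3.card_lower (N := N) hn0 r w ht0 ht1 (s := s)
    have hmono : (((N - r) / n : ℕ) : ℝ) * t ^ 2 - t * s ≤ (N / n) * t ^ 2 - t * s := by
      have := m_le (N := N) hn0 r
      nlinarith [sq_nonneg t]
    have hb : (2 : ℝ) ^ N * Real.exp ((((N - r) / n : ℕ) : ℝ) * t ^ 2 - t * s)
        ≤ 2 ^ N * Real.exp ((N / n) * t ^ 2 - t * s) := by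
      have h2N : (0 : ℝ) ≤ (2 : ℝ) ^ N := by positivity
      exact mul_le_mul_of_nonneg_left (Real.exp_le_exp.mpr hmono) h2N
    calc (((Finset.univ.filter (fun v : Fin N → Bool =>
            (1 / 2 : ℝ) ^ n * (((N - r) / n : ℕ) : ℝ) + s ≤ (X N n w r v : ℝ))
          ∪ Finset.univ.filter (fun v : Fin N → Bool =>
            (X N n w r v : ℝ) ≤ (1 / 2 : ℝ) ^ n * (((N - r) / n : ℕ) : ℝ) - s)).card : ℝ))
        ≤ ((Finset.univ.filter (fun v : Fin N → Bool =>
            (1 / 2 : ℝ) ^ n * (((N - r) / n : ℕ) : ℝ) + s ≤ (X N n w r v : ℝ))).card : ℝ)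
          + ((Finset.univ.filter (fun v : Fin N → Bool =>
            (X N n w r v : ℝ) ≤ (1 / 2 : ℝ) ^ n * (((N - r) / n : ℕ) : ℝ) - s)).card : ℝ) := by
          exact_mod_cast Finset.card_union_le _ _
    _ ≤ (2 ^ N * Real.exp ((N / n) * t ^ 2 - t * s))
          + (2 ^ N * Real.exp ((N / n) * t ^ 2 - t * s)) :=
        add_le_add (hU.trans hb) (hL.trans hb)
    _ = 2 * (2 ^ N * Real.exp ((N / n) * t ^ 2 - t * s)) := by ring
  have hmain : ((Finset.univ.filter
        (fun v : Fin N → Bool => IsAtypicalWord n N κ w v)).card : ℝ)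
      ≤ n * (2 * (2 ^ N * Real.exp ((N / n) * t ^ 2 - t * s))) := by
    calc ((Finset.univ.filter (fun v : Fin N → Bool => IsAtypicalWord n N κ w v)).card : ℝ)
        ≤ (((Finset.range n).biUnion _).card : ℝ) := by
          exact_mod_cast Finset.card_le_card hsub
    _ ≤ ∑ r ∈ Finset.range n, (((Finset.univ.filter (fun v : Fin N → Bool =>
            (1 / 2 : ℝ) ^ n * (((N - r) / n : ℕ) : ℝ) + s ≤ (X N n w r v : ℝ))
          ∪ Finset.univ.filter (fun v : Fin N → Bool =>
            (X N n w r v : ℝ) ≤ (1 / 2 : ℝ) ^ n * (((N - r) / n : ℕ) : ℝ) - s)).card : ℝ)) := by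
          exact_mod_cast Finset.card_biUnion_le
    _ ≤ ∑ r ∈ Finset.range n, 2 * (2 ^ N * Real.exp ((N / n) * t ^ 2 - t * s)) :=
        Finset.sum_le_sum hper
    _ = n * (2 * (2 ^ N * Real.exp ((N / n) * t ^ 2 - t * s))) := by
        rw [Finset.sum_const, Finset.card_range, nsmul_eq_mul]
  -- numeric endgame
  have hA : (N / n) * t ^ 2 - t * s ≤ -(c * N) + 1 / 2 := by
    have hexp : ((N : ℝ) / n) * t ^ 2 - t * s = -(3 * κ' ^ 2 * N) / (16 * n) + κ' / 2 := by
      rw [ht, hs]; field_simp; ring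
    rw [hexp, hc]
    rw [div_add' _ _ _ (by positivity : (16 : ℝ) * n ≠ 0)]
    have h16 : (0 : ℝ) < 16 * n := by positivity
    rw [div_le_iff₀ h16]
    have : -(κ' ^ 2 / (8 * n) * N) + 1 / 2 = (-(2 * κ' ^ 2 * N) + 8 * n) / (16 * n) := by
      field_simp; ring
    rw [this, div_mul_cancel₀ _ (ne_of_gt h16)]
    nlinarith
  have hrhs : (2 : ℝ) ^ ((N : ℝ) * (1 - ν)) = 2 ^ N * Real.exp (-(c / 2) * N) := by
    rw [show (N : ℝ) * (1 - ν) = (N : ℝ) + (-ν * N) by ring,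
      Real.rpow_add two_pos, Real.rpow_natCast]
    congr 1
    rw [Real.rpow_def_of_pos two_pos]
    congr 1
    rw [hν]
    field_simp
  have hfinal : (n : ℝ) * (2 * (2 ^ N * Real.exp ((N / n) * t ^ 2 - t * s)))
      ≤ 2 ^ N * Real.exp (-(c / 2) * N) := by
    have h2n0 : (0 : ℝ) < 2 * n := by positivity
    have hkey : (2 : ℝ) * n * Real.exp ((N / n) * t ^ 2 - t * s)
        ≤ Real.exp (-(c / 2) * N) := by
      calc (2 : ℝ) * n * Real.exp ((N / n) * t ^ 2 - t * s)
          = Real.exp (Real.log (2 * n) + ((N / n) * t ^ 2 - t * s)) := by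
            rw [Real.exp_add, Real.exp_log h2n0]
        _ ≤ Real.exp (-(c / 2) * N) := by
            apply Real.exp_le_exp.mpr
            have hNc' : Real.log (2 * n) + 1 / 2 ≤ c * N / 2 := by
              rw [div_mul_eq_mul_div, div_le_iff₀ hc0] at hNc
              linarith
            linarith
    calc (n : ℝ) * (2 * (2 ^ N * Real.exp ((N / n) * t ^ 2 - t * s)))
        = 2 ^ N * (2 * n * Real.exp ((N / n) * t ^ 2 - t * s)) := by ring
    _ ≤ 2 ^ N * Real.exp (-(c / 2) * N) := by
        have h2N : (0 : ℝ) ≤ (2 : ℝ) ^ N := by positivity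
        exact mul_le_mul_of_nonneg_left hkey h2N
  rw [hcardeq, hrhs]
  exact hmain.trans hfinal
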